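/- For every w ∈ W, ⟨σ(w), 2ρ⟩ = ⟨σ(w), σ(w)⟩, where σ(w) is the sum of roots in Φ⁺ ∩ w(Φ⁺) and 2ρ is the sum of all positive roots. -/

import Mathlib

open scoped RealInnerProductSpace
open Classical

noncomputable section

/-- A reduced crystallographic root system in a Euclidean space, with a chosen
set of positive roots and simple roots, together with the reflections of roots. -/
structure RootSystemData (E : Type) [NormedAddCommGroup E] [InnerProductSpace ℝ E]
    [FiniteDimensional ℝ E] where
  Φ : Finset E
  pos : Finset E
  Δ : Finset E
  zero_notMem : (0 : E) ∉ Φ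
  span_eq_top : Submodule.span ℝ (Φ : Set E) = ⊤
  neg_mem : ∀ α ∈ Φ, -α ∈ Φ
  simple_subset : Δ ⊆ pos
  pos_subset : pos ⊆ Φ
  pos_iff : ∀ α ∈ Φ, (α ∈ pos ↔ -α ∉ pos)
  reduced : ∀ α ∈ Φ, ∀ t : ℝ, t • α ∈ Φ → t = 1 ∨ t = -1
  crystallographic : ∀ α ∈ Φ, ∀ β ∈ Φ, ∃ n : ℤ, 2 * ⟪α, β⟫ / ⟪α, α⟫ = (n : ℝ)
  simple_pos_combo : ∀ β ∈ pos, ∃ c : E → ℕ, β = ∑ a ∈ Δ, (c a : ℝ) • a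
  s : E → (E ≃ₗ[ℝ] E)
  s_apply : ∀ α ∈ Φ, ∀ x : E, s α x = x - (2 * ⟪α, x⟫ / ⟪α, α⟫) • α
  s_root_mem : ∀ α ∈ Φ, ∀ β ∈ Φ, s α β ∈ Φ

namespace RootSystemData

variable {E : Type} [NormedAddCommGroup E] [InnerProductSpace ℝ E] [FiniteDimensional ℝ E]
variable (D : RootSystemData E)

/-- The Weyl group, generated by the simple reflections. -/
def W : Subgroup (E ≃ₗ[ℝ] E) := Subgroup.closure { g | ∃ α ∈ D.Δ, g = D.s α }

/-- The length of a Weyl group element: minimal length of a word in simple reflections. -/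
def length (w : E ≃ₗ[ℝ] E) : ℕ :=
  sInf { n | ∃ l : List E, (∀ a ∈ l, a ∈ D.Δ) ∧ l.length = n ∧ (l.map D.s).prod = w }

/-- The set of negative roots, as a subset of `E`. -/
def neg : Set E := (fun x => -x) '' (D.pos : Set E)

/-- `Φ⁺ ∩ w(Φ⁺)`. -/
def sameSet (w : E ≃ₗ[ℝ] E) : Finset E := D.pos.filter (fun β => w.symm β ∈ D.pos)

/-- `Φ⁺ ∩ w(Φ⁻)`. -/
def oppSet (w : E ≃ₗ[ℝ] E) : Finset E := D.pos.filter (fun β => -(w.symm β) ∈ D.pos)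

/-- `σ(w)`, the sum of the roots in `Φ⁺ ∩ w(Φ⁺)`. -/
def σ (w : E ≃ₗ[ℝ] E) : E := ∑ β ∈ D.sameSet w, β

/-- `τ(w)`, the sum of the roots in `Φ⁺ ∩ w(Φ⁻)`. -/
def τ (w : E ≃ₗ[ℝ] E) : E := ∑ β ∈ D.oppSet w, β

/-- `2ρ`, the sum of all positive roots. -/
def twoRho : E := ∑ β ∈ D.pos, β

/-- The pairing `⟨α^∨, x⟩ = 2⟨α,x⟩/⟨α,α⟩` with the coroot of `α`. -/
def copair (α x : E) : ℝ := 2 * ⟪α, x⟫ / ⟪α, α⟫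

/-- The (strict) Bruhat order: the transitive closure of the relation
`x < (s_α) * x` whenever `α` is a root and the length increases. -/
def bruhatLT : (E ≃ₗ[ℝ] E) → (E ≃ₗ[ℝ] E) → Prop :=
  Relation.TransGen (fun x y => (∃ α ∈ D.Φ, y = D.s α * x) ∧ D.length x < D.length y)

end RootSystemData

namespace RootSystemDataAux

open RootSystemData

variable {E : Type} [NormedAddCommGroup E] [InnerProductSpace ℝ E] [FiniteDimensional ℝ E]
variable (D : RootSystemData E)

lemma s_inner (α : E) (hα : α ∈ D.Φ) (x y : E) : ⟪D.s α x, D.s α y⟫ = ⟪x, y⟫ := by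
  have hα0 : α ≠ 0 := fun h => D.zero_notMem (h ▸ hα)
  have haa : ⟪α, α⟫ ≠ 0 := fun h => hα0 (inner_self_eq_zero.mp h)
  rw [D.s_apply α hα x, D.s_apply α hα y]
  simp only [inner_sub_left, inner_sub_right, inner_smul_left, inner_smul_right,
    RCLike.ofReal_real_eq_id, id, conj_trivial]
  rw [real_inner_comm α x]
  field_simp
  ring

lemma W_inner : ∀ w ∈ D.W, ∀ x y : E, ⟪w x, w y⟫ = ⟪x, y⟫ := by
  intro w hw
  induction hw using Subgroup.closure_induction with
  | mem g hg =>
    obtain ⟨α, hα, rfl⟩ := hg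
    exact s_inner D α (D.pos_subset (D.simple_subset hα))
  | one => intro x y; rfl
  | mul g h _ _ hg hh =>
    intro x y
    have : ∀ z : E, (g * h) z = g (h z) := fun z => rfl
    rw [this, this, hg, hh]
  | inv g _ hg =>
    intro x y
    have h1 : ∀ z : E, g (g⁻¹ z) = z := fun z => g.apply_symm_apply z
    have := hg (g⁻¹ x) (g⁻¹ y)
    rw [h1, h1] at this
    exact this.symm

lemma W_maps : ∀ w ∈ D.W, ∀ α ∈ D.Φ, w α ∈ D.Φ := by
  intro w hw
  induction hw using Subgroup.closure_induction with
  | mem g hg =>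
    obtain ⟨α, hα, rfl⟩ := hg
    exact D.s_root_mem α (D.pos_subset (D.simple_subset hα))
  | one => intro α hα; exact hα
  | mul g h _ _ hg hh => intro α hα; exact hg _ (hh α hα)
  | inv g _ hg =>
    intro α hα
    have himg : D.Φ.image (fun x => g x) = D.Φ := by
      apply Finset.eq_of_subset_of_card_le
      · intro x hx
        obtain ⟨β, hβ, rfl⟩ := Finset.mem_image.mp hx
        exact hg β hβ
      · rw [Finset.card_image_of_injective _ g.injective]
    rw [← himg] at hα
    obtain ⟨β, hβ, hgβ⟩ := Finset.mem_image.mp hα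
    have h3 : g⁻¹ α = β := by
      show g.symm α = β
      rw [← hgβ, g.symm_apply_apply]
    rwa [h3]

lemma partition (w : E ≃ₗ[ℝ] E) (hw : w ∈ D.W) : D.σ w + D.τ w = D.twoRho := by
  have hinv : w⁻¹ ∈ D.W := inv_mem hw
  rw [RootSystemData.σ, RootSystemData.τ, RootSystemData.twoRho,
    ← Finset.sum_union]
  · congr 1
    ext β
    simp only [RootSystemData.sameSet, RootSystemData.oppSet, Finset.mem_union,
      Finset.mem_filter]
    constructor
    · rintro (⟨h, _⟩ | ⟨h, _⟩) <;> exact h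
    · intro hβ
      have hβΦ : w.symm β ∈ D.Φ := W_maps D w⁻¹ hinv β (D.pos_subset hβ)
      by_cases h : w.symm β ∈ D.pos
      · exact Or.inl ⟨hβ, h⟩
      · refine Or.inr ⟨hβ, ?_⟩
        have h4 := D.pos_iff _ (D.neg_mem _ hβΦ)
        rw [neg_neg] at h4
        exact h4.mpr h
  · rw [Finset.disjoint_left]
    intro β hβ hβ'
    simp only [RootSystemData.sameSet, RootSystemData.oppSet, Finset.mem_filter] at hβ hβ'
    have hβΦ : w.symm β ∈ D.Φ := W_maps D w⁻¹ (inv_mem hw) β (D.pos_subset hβ.1)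
    exact ((D.pos_iff _ hβΦ).mp hβ.2) hβ'.2

lemma sigma_inv (w : E ≃ₗ[ℝ] E) : D.σ w⁻¹ = w.symm (D.σ w) := by
  rw [RootSystemData.σ, RootSystemData.σ, map_sum]
  apply Finset.sum_nbij' (fun β => w β) (fun β => w.symm β)
  · intro β hβ
    simp only [RootSystemData.sameSet, Finset.mem_filter] at hβ ⊢
    exact ⟨hβ.2, by rw [w.symm_apply_apply]; exact hβ.1⟩
  · intro β hβ
    simp only [RootSystemData.sameSet, Finset.mem_filter] at hβ ⊢
    refine ⟨hβ.2, ?_⟩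
    show w (w.symm β) ∈ D.pos
    rw [w.apply_symm_apply]; exact hβ.1
  · intro β _; exact w.symm_apply_apply β
  · intro β _; exact w.apply_symm_apply β
  · intro β _; exact (w.symm_apply_apply β).symm

lemma tau_inv (w : E ≃ₗ[ℝ] E) : D.τ w⁻¹ = - w.symm (D.τ w) := by
  rw [RootSystemData.τ, RootSystemData.τ, map_sum, ← Finset.sum_neg_distrib]
  apply Finset.sum_nbij' (fun β => -(w β)) (fun β => -(w.symm β))
  · intro β hβ
    simp only [RootSystemData.sameSet, RootSystemData.oppSet, Finset.mem_filter] at hβ ⊢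
    refine ⟨?_, ?_⟩
    · have : (w⁻¹).symm β = w β := rfl
      rw [← this]; exact hβ.2
    · show -(w.symm (-(w β))) ∈ D.pos
      rw [map_neg, w.symm_apply_apply, neg_neg]; exact hβ.1
  · intro β hβ
    simp only [RootSystemData.oppSet, Finset.mem_filter] at hβ ⊢
    constructor
    · have : -(w.symm β) ∈ D.pos := hβ.2
      simpa using this
    · show -((w⁻¹).symm (-(w.symm β))) ∈ D.pos
      show -(w (-(w.symm β))) ∈ D.pos
      rw [map_neg, w.apply_symm_apply, neg_neg]; exact hβ.1
  · intro β _; simp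
  · intro β _; simp
  · intro β _; simp

end RootSystemDataAux

theorem inner_sigma_twoRho_eq_inner_sigma_self {E : Type} [NormedAddCommGroup E] [InnerProductSpace ℝ E]
    [FiniteDimensional ℝ E] (D : RootSystemData E)
    (w : E ≃ₗ[ℝ] E) (hw : w ∈ D.W) :
    ⟪ D.σ w, D.twoRho ⟫ = ⟪ D.σ w, D.σ w ⟫ := by
  have hpart := RootSystemDataAux.partition D w hw
  have hpart' := RootSystemDataAux.partition D w⁻¹ (inv_mem hw)
  rw [RootSystemDataAux.sigma_inv, RootSystemDataAux.tau_inv] at hpart'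
  set a := D.σ w
  set b := D.τ w
  have hinv : ∀ x, w⁻¹ x = w.symm x := fun x => rfl
  have hkey : w.symm (a - b) = a + b := by
    rw [map_sub, sub_eq_add_neg, hpart', hpart]
  have hab : ⟪a, b⟫ = 0 := by
    have h1 : ⟪a - b, a - b⟫ = ⟪w.symm (a - b), w.symm (a - b)⟫ :=
      (RootSystemDataAux.W_inner D w⁻¹ (inv_mem hw) (a - b) (a - b)).symm
    rw [hkey] at h1
    simp only [inner_sub_left, inner_sub_right, inner_add_left, inner_add_right] at h1
    have hc := real_inner_comm a b
    have hba : ⟪b, a⟫ = 0 := by linarith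
    rw [real_inner_comm]; exact hba
  rw [← hpart, inner_add_right, hab, add_zero]
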